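/- arXiv:1011.5496 — 4 statements merged into one kernel-verified Lean document; each statement's English description precedes it below -/
import Mathlib

section
/- Suppose p x y > 0 for all x ∈ 𝒳₁ and y ∈ 𝒳₂ (full support). Then non-adjacency in the characteristic graph G_{X₁} is transitive: for all a, b, c ∈ 𝒳₁, if a and b are not adjacent in G_{X₁} and b and c are not adjacent in G_{X₁}, then a and c are not adjacent in G_{X₁}. Equivalently, the relation 'a = b or a and b are non-adjacent in G_{X₁}' is an equivalence relation on 𝒳₁, i.e., the complement of G_{X₁} is a disjoint union of cliques. -/
/-- The characteristic graph `G_{X₁}` of `X₁` with respect to `X₂`, the joint weights `p`,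
and the function `f`: distinct vertices `a, b : X1` are adjacent iff there exists `y : X2`
with `p a y > 0`, `p b y > 0`, and `f a y ≠ f b y`. -/
def charGraph {X1 X2 Z : Type*} (f : X1 → X2 → Z) (p : X1 → X2 → ℝ) : SimpleGraph X1 where
  Adj a b := a ≠ b ∧ ∃ y, 0 < p a y ∧ 0 < p b y ∧ f a y ≠ f b y
  symm := by
    refine ⟨?_⟩
    rintro a b ⟨hab, y, h1, h2, h3⟩
    exact ⟨hab.symm, y, h2, h1, h3.symm⟩
  loopless := by
    refine ⟨?_⟩
    rintro a ⟨h, -⟩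
    exact h rfl

/-- Under the full-support hypothesis, non-adjacency in the characteristic graph is
transitive (equivalently, the complement of `G_{X₁}` is a disjoint union of cliques). -/
theorem stmt0 {X1 X2 Z : Type*} [Fintype X1] [Nonempty X1] [Fintype X2] [Nonempty X2]
    (f : X1 → X2 → Z) (p : X1 → X2 → ℝ) (hp : ∀ x y, 0 < p x y) :
    ∀ a b c : X1, ¬ (charGraph f p).Adj a b → ¬ (charGraph f p).Adj b c →
      ¬ (charGraph f p).Adj a c := by
  intro a b c hab hbc
  rintro ⟨hac, y, -, -, hf⟩
  have key : ∀ u v : X1, ¬ (charGraph f p).Adj u v → u = v ∨ ∀ z, f u z = f v z := by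
    intro u v h
    by_cases huv : u = v
    · exact Or.inl huv
    · right
      intro z
      by_contra hne
      exact h ⟨huv, z, hp u z, hp v z, hne⟩
  rcases key a b hab with rfl | h1
  · rcases key a c hbc with rfl | h2
    · exact hac rfl
    · exact hf (h2 y)
  · rcases key b c hbc with rfl | h2
    · exact hf (h1 y)
    · exact hf ((h1 y).trans (h2 y))
end

section
/- Suppose each c_i : 𝒳 i → C_i is a proper coloring of the characteristic graph G_i. If x and x' are admissible points joined by a path within a joint coloring class (a finite sequence of admissible points starting at x and ending at x', all having the same color tuple (c_i applied coordinatewise), in which any two consecutive points differ in exactly one coordinate), then f x = f x'. -/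
/-- The characteristic graph `G_i` of the `i`-th source with respect to the other sources,
the joint weights `p`, and the function `f`: distinct `a, b : 𝒳 i` are adjacent iff there is
an admissible point `x` with `x i = a` such that `Function.update x i b` is also admissible
and `f` takes different values at the two points. -/
def charGraphI {k : ℕ} {𝒳 : Fin k → Type*} {Z : Type*}
    (f : (∀ i, 𝒳 i) → Z) (p : (∀ i, 𝒳 i) → ℝ) (i : Fin k) : SimpleGraph (𝒳 i) where
  Adj a b := a ≠ b ∧ ∃ x : ∀ j, 𝒳 j, x i = a ∧ 0 < p x ∧ 0 < p (Function.update x i b) ∧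
      f x ≠ f (Function.update x i b)
  symm := by
    constructor
    rintro a b ⟨hab, x, hxi, hpx, hpx', hf⟩
    have h1 : Function.update (Function.update x i b) i a = x := by
      rw [Function.update_idem, ← hxi, Function.update_eq_self]
    refine ⟨hab.symm, Function.update x i b, by simp, hpx', ?_, ?_⟩
    · rw [h1]; exact hpx
    · rw [h1]; exact hf.symm
  loopless := by
    constructor
    rintro a ⟨h, -⟩
    exact h rfl

/-- Two points differ in exactly one coordinate. -/
def DifferAtOne {k : ℕ} {𝒳 : Fin k → Type*} (x x' : ∀ i, 𝒳 i) : Prop :=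
  ∃ i, x i ≠ x' i ∧ ∀ j, j ≠ i → x j = x' j

/-- A path within a joint coloring class from `x` to `x'`: a finite sequence of admissible
points starting at `x` and ending at `x'`, all having the same color tuple as `x`, in which
any two consecutive points differ in exactly one coordinate. -/
def JointClassPath {k : ℕ} {𝒳 : Fin k → Type*} {C : Fin k → Type*}
    (p : (∀ i, 𝒳 i) → ℝ) (c : ∀ i, 𝒳 i → C i) (x x' : ∀ i, 𝒳 i) : Prop :=
  ∃ (m : ℕ) (w : Fin (m + 1) → ∀ i, 𝒳 i),
    w 0 = x ∧ w (Fin.last m) = x' ∧ (∀ t, 0 < p (w t)) ∧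
    (∀ t i, c i (w t i) = c i (x i)) ∧
    ∀ t : Fin m, DifferAtOne (w t.castSucc) (w t.succ)

/-- If each `c i` is a proper coloring of the characteristic graph `G_i`, then any two
admissible points joined by a path within a joint coloring class have the same `f`-value. -/
theorem stmt9 {k : ℕ} (hk : 0 < k) {𝒳 : Fin k → Type*} [∀ i, Fintype (𝒳 i)]
    [∀ i, Nonempty (𝒳 i)] {Z : Type*} {C : Fin k → Type*}
    (f : (∀ i, 𝒳 i) → Z) (p : (∀ i, 𝒳 i) → ℝ) (hp : ∀ x, 0 ≤ p x)
    (c : ∀ i, 𝒳 i → C i)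
    (hc : ∀ i, ∀ a b, (charGraphI f p i).Adj a b → c i a ≠ c i b)
    (x x' : ∀ i, 𝒳 i) (hx : 0 < p x) (hx' : 0 < p x')
    (hpath : JointClassPath p c x x') :
    f x = f x' := by
  obtain ⟨m, w, hw0, hwlast, hadm, hcol, hstep⟩ := hpath
  have key : ∀ t : Fin m, f (w t.castSucc) = f (w t.succ) := by
    intro t
    obtain ⟨i, hne, heq⟩ := hstep t
    have hupd : Function.update (w t.castSucc) i (w t.succ i) = w t.succ := by
      funext j
      rcases eq_or_ne j i with rfl | hj
      · simp
      · rw [Function.update_of_ne hj]; exact heq j hj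
    by_contra hf
    have hadj : (charGraphI f p i).Adj (w t.castSucc i) (w t.succ i) :=
      ⟨hne, w t.castSucc, rfl, hadm _, by rw [hupd]; exact hadm _, by rw [hupd]; exact hf⟩
    exact hc i _ _ hadj (by rw [hcol t.castSucc i, hcol t.succ i])
  have main : ∀ t : Fin (m + 1), f (w 0) = f (w t) := by
    intro t
    induction t using Fin.induction with
    | zero => rfl
    | succ t ih => rw [ih, key t]
  rw [← hw0, ← hwlast]
  exact main (Fin.last m)
end

section
/- Suppose there are types M_i, encoders e_i : 𝒳 i → M_i, and a decoder r : (Π i, M_i) → 𝒵 such that r (fun i ↦ e_i (x i)) = f x for every admissible point x (a zero-error distributed functional code). Then each encoder e_i is a proper coloring of the characteristic graph G_i (adjacent vertices of G_i receive distinct values of e_i), and the colorings e_1, …, e_k satisfy the coloring connectivity condition; in particular, any two admissible points whose tuples of encoder outputs agree have the same f-value. -/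
/-- The colorings `c i` satisfy the coloring connectivity condition (C.C.C.): any two
admissible points in the same joint coloring class either have the same `f`-value or are
joined by a path within that joint coloring class. -/
def CCC {k : ℕ} {𝒳 : Fin k → Type*} {Z : Type*} {C : Fin k → Type*}
    (f : (∀ i, 𝒳 i) → Z) (p : (∀ i, 𝒳 i) → ℝ) (c : ∀ i, 𝒳 i → C i) : Prop :=
  ∀ x x' : ∀ i, 𝒳 i, 0 < p x → 0 < p x' → (∀ i, c i (x i) = c i (x' i)) →
    f x = f x' ∨ JointClassPath p c x x'

/-- A zero-error distributed functional code (encoders `e i` and a decoder `r` recovering `f`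
at every admissible point) induces proper colorings of the characteristic graphs `G_i` which
satisfy the coloring connectivity condition; in particular, any two admissible points with
the same tuple of encoder outputs have the same `f`-value. -/
theorem stmt11 {k : ℕ} (hk : 0 < k) {𝒳 : Fin k → Type*} [∀ i, Fintype (𝒳 i)]
    [∀ i, Nonempty (𝒳 i)] {Z : Type*} {M : Fin k → Type*}
    (f : (∀ i, 𝒳 i) → Z) (p : (∀ i, 𝒳 i) → ℝ) (hp : ∀ x, 0 ≤ p x)
    (e : ∀ i, 𝒳 i → M i) (r : (∀ i, M i) → Z)
    (hcode : ∀ x : ∀ i, 𝒳 i, 0 < p x → r (fun i => e i (x i)) = f x) :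
    (∀ i, ∀ a b, (charGraphI f p i).Adj a b → e i a ≠ e i b) ∧
    CCC f p e ∧
    (∀ x x' : ∀ i, 𝒳 i, 0 < p x → 0 < p x' → (∀ i, e i (x i) = e i (x' i)) →
      f x = f x') := by
  have key : ∀ x x' : ∀ i, 𝒳 i, 0 < p x → 0 < p x' → (∀ i, e i (x i) = e i (x' i)) →
      f x = f x' := by
    intro x x' hx hx' h
    rw [← hcode x hx, ← hcode x' hx']
    congr 1
    funext i
    exact h i
  refine ⟨?_, ?_, key⟩
  · rintro i a b ⟨hab, x, hxi, hpx, hpx', hf⟩ he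
    apply hf
    apply key _ _ hpx hpx'
    intro j
    by_cases hj : j = i
    · subst hj
      rw [Function.update_self, hxi, he]
    · rw [Function.update_of_ne hj]
  · intro x x' hx hx' h
    exact Or.inl (key x x' hx hx' h)
end

section
/- Suppose p x y > 0 for all x ∈ 𝒳₁ and y ∈ 𝒳₂ (full support) and let D ≥ 0. Let c₁ be a proper coloring of the (D/2)-characteristic graph G_{X₁}(D/2) and c₂ a proper coloring of the (D/2)-characteristic graph G_{X₂}(D/2). Then for all x₁, x₁' ∈ 𝒳₁ and x₂, x₂' ∈ 𝒳₂ with c₁ x₁ = c₁ x₁' and c₂ x₂ = c₂ x₂', one has d (f x₁ x₂) (f x₁' x₂') ≤ D; that is, from the two colors the receiver can reconstruct the value of f within distortion D. -/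
/-- The `D'`-characteristic graph `G_{X₁}(D')` of `X₁` with respect to `X₂`, `p`, and `f`
valued in a metric space: distinct `a, a'` are adjacent iff there exists `y` with
`p a y > 0`, `p a' y > 0`, and `dist (f a y) (f a' y) > D'`. -/
def dCharGraph1 {X1 X2 Z : Type*} [MetricSpace Z]
    (f : X1 → X2 → Z) (p : X1 → X2 → ℝ) (D' : ℝ) : SimpleGraph X1 where
  Adj a a' := a ≠ a' ∧ ∃ y, 0 < p a y ∧ 0 < p a' y ∧ D' < dist (f a y) (f a' y)
  symm := by
    constructor
    rintro a a' ⟨hne, y, h1, h2, h3⟩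
    exact ⟨hne.symm, y, h2, h1, by rwa [dist_comm]⟩
  loopless := by
    constructor
    rintro a ⟨h, -⟩
    exact h rfl

/-- The `D'`-characteristic graph `G_{X₂}(D')` of `X₂` with respect to `X₁`, `p`, and `f`. -/
def dCharGraph2 {X1 X2 Z : Type*} [MetricSpace Z]
    (f : X1 → X2 → Z) (p : X1 → X2 → ℝ) (D' : ℝ) : SimpleGraph X2 where
  Adj b b' := b ≠ b' ∧ ∃ x, 0 < p x b ∧ 0 < p x b' ∧ D' < dist (f x b) (f x b')
  symm := by
    constructor
    rintro b b' ⟨hne, x, h1, h2, h3⟩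
    exact ⟨hne.symm, x, h2, h1, by rwa [dist_comm]⟩
  loopless := by
    constructor
    rintro b ⟨h, -⟩
    exact h rfl

/-- Under full support, given proper colorings of the `(D/2)`-characteristic graphs of `X₁`
and `X₂`, any two pairs with matching colors have `f`-values within distance `D`; hence from
the two colors the receiver can compute `f` within distortion `D`. -/
theorem stmt16 {X1 X2 Z C₁ C₂ : Type*} [Fintype X1] [Nonempty X1] [Fintype X2] [Nonempty X2]
    [MetricSpace Z]
    (f : X1 → X2 → Z) (p : X1 → X2 → ℝ) (hp : ∀ x y, 0 < p x y)
    (D : ℝ) (hD : 0 ≤ D)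
    (c₁ : X1 → C₁) (hc₁ : ∀ a a', (dCharGraph1 f p (D / 2)).Adj a a' → c₁ a ≠ c₁ a')
    (c₂ : X2 → C₂) (hc₂ : ∀ b b', (dCharGraph2 f p (D / 2)).Adj b b' → c₂ b ≠ c₂ b') :
    ∀ (x₁ x₁' : X1) (x₂ x₂' : X2), c₁ x₁ = c₁ x₁' → c₂ x₂ = c₂ x₂' →
      dist (f x₁ x₂) (f x₁' x₂') ≤ D := by
  intro x₁ x₁' x₂ x₂' h1 h2
  have h1' : dist (f x₁ x₂) (f x₁' x₂) ≤ D / 2 := by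
    by_cases he : x₁ = x₁'
    · subst he; simp; positivity
    · by_contra hlt
      exact hc₁ x₁ x₁' ⟨he, x₂, hp _ _, hp _ _, lt_of_not_ge hlt⟩ h1
  have h2' : dist (f x₁' x₂) (f x₁' x₂') ≤ D / 2 := by
    by_cases he : x₂ = x₂'
    · subst he; simp; positivity
    · by_contra hlt
      exact hc₂ x₂ x₂' ⟨he, x₁', hp _ _, hp _ _, lt_of_not_ge hlt⟩ h2
  calc dist (f x₁ x₂) (f x₁' x₂') ≤ _ + _ := dist_triangle _ (f x₁' x₂) _
    _ ≤ D / 2 + D / 2 := add_le_add h1' h2'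
    _ = D := by ring
end
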